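/- arXiv:2103.15919 — 6 statements merged into one kernel-verified Lean document; each statement's English description precedes it below -/
import Mathlib

section
/- Let λ > 0, let d₁,…,d_K ∈ ℝ^p, and let F₁,…,F_L be symmetric positive semidefinite real p×p matrices. The structured sparse kernel k(β) = exp(−λ(∑_{k=1}^K |dₖᵀβ| + ∑_{ℓ=1}^L √(βᵀ F_ℓ β))) is Lebesgue-integrable over ℝ^p if and only if the stacked (K+Lp)×p matrix D̄, whose rows are d₁ᵀ,…,d_Kᵀ followed by the rows of F₁,…,F_L, has rank p (full column rank). -/
open MeasureTheory Matrix Set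
open scoped ENNReal NNReal

/-! Auxiliary lemmas for `structured_sparse_prior_proper_iff`. -/

lemma sspAux_sqrt_dot_eq_norm {p : ℕ} (x : Fin p → ℝ) :
    Real.sqrt (x ⬝ᵥ x) = ‖(WithLp.equiv 2 (Fin p → ℝ)).symm x‖ := by
  rw [EuclideanSpace.norm_eq]
  congr 1
  simp [dotProduct, Real.norm_eq_abs, sq_abs, pow_two]

lemma sspAux_sqrt_dot_add_le {p : ℕ} (x y : Fin p → ℝ) :
    Real.sqrt ((x + y) ⬝ᵥ (x + y)) ≤ Real.sqrt (x ⬝ᵥ x) + Real.sqrt (y ⬝ᵥ y) := by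
  rw [sspAux_sqrt_dot_eq_norm, sspAux_sqrt_dot_eq_norm, sspAux_sqrt_dot_eq_norm]
  exact norm_add_le _ _

lemma sspAux_integrable_exp_abs {a : ℝ} (ha : 0 < a) :
    Integrable (fun x : ℝ => Real.exp (-(a * |x|))) := by
  have h1 : IntegrableOn (fun x : ℝ => Real.exp (-(a * |x|))) (Ioi 0) := by
    refine (exp_neg_integrableOn_Ioi 0 ha).congr_fun (fun x hx => ?_) measurableSet_Ioi
    rw [abs_of_pos hx]; beta_reduce; rw [neg_mul]
  have h2 : IntegrableOn (fun x : ℝ => Real.exp (-(a * |x|))) (Iic 0) := by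
    rw [← Measure.map_neg_eq_self (volume : Measure ℝ)]
    have m : MeasurableEmbedding fun x : ℝ => -x := (Homeomorph.neg ℝ).measurableEmbedding
    rw [m.integrableOn_map_iff]
    simp only [Function.comp_def, abs_neg, neg_preimage, neg_Iic, neg_zero]
    exact Iff.mpr integrableOn_Ici_iff_integrableOn_Ioi h1
  have := h2.union h1
  rwa [Iic_union_Ioi, integrableOn_univ] at this

lemma sspAux_rank_iff {m : Type*} [Fintype m] {p : ℕ} (A : Matrix m (Fin p) ℝ) :
    A.rank = p ↔ ∀ x : Fin p → ℝ, A *ᵥ x = 0 → x = 0 := by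
  classical
  have hdef : A.rank = Module.finrank ℝ (LinearMap.range A.mulVecLin) := rfl
  have hadd := LinearMap.finrank_range_add_finrank_ker A.mulVecLin
  rw [Module.finrank_fin_fun] at hadd
  constructor
  · intro hr x hx
    have h0 : Module.finrank ℝ (LinearMap.ker A.mulVecLin) = 0 := by omega
    have hbot : LinearMap.ker A.mulVecLin = ⊥ := Submodule.finrank_eq_zero.mp h0
    have hmem : x ∈ LinearMap.ker A.mulVecLin := by
      rw [LinearMap.mem_ker, Matrix.mulVecLin_apply, hx]
    rw [hbot, Submodule.mem_bot] at hmem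
    exact hmem
  · intro h
    have hbot : LinearMap.ker A.mulVecLin = ⊥ := by
      rw [Submodule.eq_bot_iff]
      intro x hx
      exact h x (by rwa [LinearMap.mem_ker, Matrix.mulVecLin_apply] at hx)
    have h0 : Module.finrank ℝ (LinearMap.ker A.mulVecLin) = 0 := by
      rw [hbot]; exact finrank_bot ℝ _
    omega

lemma sspAux_pi_univ_top {ι : Type*} [Fintype ι] [Nonempty ι] :
    (volume : Measure (ι → ℝ)) univ = ⊤ := by
  rw [volume_pi, Measure.pi_univ]
  simp only [Real.volume_univ, Finset.prod_const, Finset.card_univ]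
  exact ENNReal.top_pow Fintype.card_ne_zero

lemma sspAux_not_integrable {p : ℕ} (f : (Fin p → ℝ) → ℝ) (hc : Continuous f)
    (hpos : ∀ β, 0 < f β) (v : Fin p → ℝ) (hv : v ≠ 0)
    (hinv : ∀ (β : Fin p → ℝ) (t : ℝ), f (β + t • v) = f β) :
    ¬ Integrable f volume := by
  intro hint
  obtain ⟨j, hj⟩ : ∃ j, v j ≠ 0 := by
    by_contra h; push_neg at h; exact hv (funext h)
  set w : Fin p → ℝ := (v j)⁻¹ • v - Pi.single j 1 with hw
  set L : (Fin p → ℝ) →ₗ[ℝ] (Fin p → ℝ) :=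
    LinearMap.id + (LinearMap.proj j).smulRight w with hL
  have hLapply : ∀ β, L β = β + (β j) • w := fun β => rfl
  have hLcont : Continuous L := L.continuous_of_finiteDimensional
  -- the matrix of L and its determinant
  have hM : LinearMap.toMatrix' L = (1 : Matrix (Fin p) (Fin p) ℝ).updateCol j ((v j)⁻¹ • v) := by
    ext i i'
    rw [LinearMap.toMatrix'_apply, hLapply]
    by_cases h : i' = j
    · subst h
      rw [Matrix.updateCol_self]
      simp [hw, Pi.single_apply]
    · rw [Matrix.updateCol_ne h]
      simp [Matrix.one_apply, Ne.symm h, Pi.single_apply]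
  have hdet : LinearMap.det L = 1 := by
    rw [← LinearMap.det_toMatrix', hM, ← Matrix.cramer_apply, Matrix.cramer_one]
    simp [hj]
  have hmeas : MeasurePreserving L volume volume := by
    refine ⟨hLcont.measurable, ?_⟩
    rw [Real.map_linearMap_volume_pi_eq_smul_volume_pi (by rw [hdet]; norm_num), hdet]
    simp
  -- f ∘ L is integrable and depends only on coordinates ≠ j
  have hgint : Integrable (f ∘ L) volume :=
    (hmeas.integrable_comp hc.aestronglyMeasurable).mpr hint
  set g : (Fin p → ℝ) → ℝ := f ∘ L with hg
  have hgcont : Continuous g := hc.comp hLcont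
  have hgpos : ∀ β, 0 < g β := fun β => hpos _
  have hgval : ∀ β, g β = f (β - β j • (Pi.single j 1 : Fin p → ℝ)) := by
    intro β
    have hrw : L β = (β - β j • (Pi.single j 1 : Fin p → ℝ)) + (β j / v j) • v := by
      rw [hLapply]
      funext i
      by_cases hij : i = j <;>
        simp [hw, Pi.single_apply, hij, div_eq_mul_inv] <;> ring
    rw [hg, Function.comp_apply, hrw, hinv]
  have hgcoords : ∀ β β' : Fin p → ℝ, (∀ i, i ≠ j → β i = β' i) → g β = g β' := by
    intro β β' h
    rw [hgval β, hgval β']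
    refine congrArg f (funext fun i => ?_)
    by_cases hij : i = j
    · subst hij; simp
    · simp [Pi.single_apply, hij, h i hij]
  -- split coordinates
  set e := MeasurableEquiv.piEquivPiSubtypeProd (fun _ : Fin p => ℝ) (fun i => i = j) with he
  have hmp := volume_preserving_piEquivPiSubtypeProd (fun _ : Fin p => ℝ) (fun i => i = j)
  have hprodint := ((hmp.symm e).integrable_comp hgcont.aestronglyMeasurable).mpr hgint
  set G : ({i : Fin p // ¬ i = j} → ℝ) → ℝ := fun y => g (e.symm (fun _ => 0, y)) with hG
  have hGval : ∀ x y, g (e.symm (x, y)) = G y := by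
    intro x y
    refine hgcoords _ _ (fun i hij => ?_)
    show (Equiv.piEquivPiSubtypeProd (fun i => i = j) (fun _ : Fin p => ℝ)).symm (x, y) i
        = (Equiv.piEquivPiSubtypeProd (fun i => i = j) (fun _ : Fin p => ℝ)).symm (fun _ => 0, y) i
    rw [Equiv.piEquivPiSubtypeProd_symm_apply, Equiv.piEquivPiSubtypeProd_symm_apply]
    simp [hij]
  have hGpos : ∀ y, 0 < G y := fun y => hgpos _
  have hstitch : Continuous fun y : ({i : Fin p // ¬ i = j} → ℝ) =>
      (e.symm ((fun _ => 0), y) : Fin p → ℝ) := by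
    apply continuous_pi
    intro i
    show Continuous fun y : ({i : Fin p // ¬ i = j} → ℝ) =>
      (Equiv.piEquivPiSubtypeProd (fun i => i = j) (fun _ : Fin p => ℝ)).symm (fun _ => 0, y) i
    simp only [Equiv.piEquivPiSubtypeProd_symm_apply]
    by_cases h : i = j
    · simp only [dif_pos h]; exact continuous_const
    · simp only [dif_neg h]; exact continuous_apply _
  have hGcont : Continuous G := hgcont.comp hstitch
  -- Fubini gives an infinite integral
  obtain ⟨-, hfin⟩ := hprodint
  unfold HasFiniteIntegral at hfin
  have hzmeas : Measurable fun z : ({i : Fin p // i = j} → ℝ) × ({i : Fin p // ¬ i = j} → ℝ) =>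
      ((‖(g ∘ e.symm) z‖₊ : ℝ≥0∞)) :=
    ((hgcont.measurable.comp e.symm.measurable).nnnorm).coe_nnreal_ennreal
  simp only [enorm_eq_nnnorm] at hfin
  rw [Measure.volume_eq_prod, MeasureTheory.lintegral_prod _ hzmeas.aemeasurable] at hfin
  have hinner : ∀ x, (∫⁻ y, (‖(g ∘ e.symm) (x, y)‖₊ : ℝ≥0∞)) = ∫⁻ y, (‖G y‖₊ : ℝ≥0∞) := by
    intro x
    congr 1
    funext y
    rw [Function.comp_apply, hGval]
  simp only [hinner] at hfin
  rw [lintegral_const] at hfin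
  haveI : Nonempty {i : Fin p // i = j} := ⟨⟨j, rfl⟩⟩
  have hGmeas : Measurable fun y => ((‖G y‖₊ : ℝ≥0∞)) :=
    (hGcont.measurable.nnnorm).coe_nnreal_ennreal
  have hCne : (∫⁻ y, (‖G y‖₊ : ℝ≥0∞)) ≠ 0 := by
    intro h0
    rw [lintegral_eq_zero_iff hGmeas] at h0
    rw [Filter.EventuallyEq, ae_iff] at h0
    simp only [Pi.zero_apply] at h0
    have huniv : {y : ({i : Fin p // ¬ i = j} → ℝ) |
        ¬ ((‖G y‖₊ : ℝ≥0∞) = 0)} = univ := by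
      refine eq_univ_of_forall fun y => ?_
      simp [nnnorm_eq_zero, (hGpos y).ne']
    rw [huniv] at h0
    have : (volume : Measure ({i : Fin p // ¬ i = j} → ℝ)) univ ≠ 0 := by
      rw [volume_pi, Measure.pi_univ, Finset.prod_ne_zero_iff]
      intro i _
      simp [Real.volume_univ]
    exact this h0
  have hfin2 : (∫⁻ (y : { i : Fin p // ¬i = j } → ℝ), (‖G y‖₊ : ℝ≥0∞)) *
      (volume : Measure ({ i : Fin p // i = j } → ℝ)) univ < ⊤ := by
    convert hfin using 2
    congr!
  rw [sspAux_pi_univ_top, ENNReal.mul_top hCne] at hfin2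
  exact lt_irrefl ⊤ hfin2

/-- The seminorm associated with the structured sparse kernel. -/
noncomputable def sspN {p K L : ℕ} (d : Fin K → (Fin p → ℝ))
    (F : Fin L → Matrix (Fin p) (Fin p) ℝ) (β : Fin p → ℝ) : ℝ :=
  (∑ k, |d k ⬝ᵥ β|) + ∑ ℓ, Real.sqrt (β ⬝ᵥ (F ℓ) *ᵥ β)

section sspN

variable {p K L : ℕ} (d : Fin K → (Fin p → ℝ)) (F : Fin L → Matrix (Fin p) (Fin p) ℝ)

lemma sspN_nonneg (β : Fin p → ℝ) : 0 ≤ sspN d F β :=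
  add_nonneg (Finset.sum_nonneg fun _ _ => abs_nonneg _)
    (Finset.sum_nonneg fun _ _ => Real.sqrt_nonneg _)

lemma sspN_smul (t : ℝ) (β : Fin p → ℝ) : sspN d F (t • β) = |t| * sspN d F β := by
  have h1 : ∀ k, |d k ⬝ᵥ (t • β)| = |t| * |d k ⬝ᵥ β| := by
    intro k
    rw [dotProduct_smul, smul_eq_mul, abs_mul]
  have h2 : ∀ ℓ, Real.sqrt ((t • β) ⬝ᵥ (F ℓ) *ᵥ (t • β))
      = |t| * Real.sqrt (β ⬝ᵥ (F ℓ) *ᵥ β) := by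
    intro ℓ
    rw [mulVec_smul, dotProduct_smul, smul_dotProduct, smul_eq_mul, smul_eq_mul,
      ← mul_assoc, ← sq, Real.sqrt_mul (sq_nonneg t), Real.sqrt_sq_eq_abs]
  unfold sspN
  simp only [h1, h2, ← Finset.mul_sum, mul_add]

open scoped MatrixOrder in
lemma sspN_dot_eq (hFpsd : ∀ ℓ, (F ℓ).PosSemidef) :
    ∃ B : Fin L → Matrix (Fin p) (Fin p) ℝ,
      ∀ ℓ (x : Fin p → ℝ), x ⬝ᵥ (F ℓ) *ᵥ x = (B ℓ *ᵥ x) ⬝ᵥ (B ℓ *ᵥ x) := by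
  have hstar : ∀ y : Fin p → ℝ, star y = y := fun y => funext fun i => star_trivial _
  choose B hB using fun ℓ => (⟨CFC.sqrt (F ℓ), by
    rw [← Matrix.star_eq_conjTranspose, (CFC.sqrt_nonneg (F ℓ)).isSelfAdjoint.star_eq,
      CFC.sqrt_mul_sqrt_self _ (hFpsd ℓ).nonneg]⟩ : ∃ B : Matrix (Fin p) (Fin p) ℝ, F ℓ = Bᴴ * B)
  refine ⟨B, fun ℓ x => ?_⟩
  rw [hB ℓ, ← mulVec_mulVec, dotProduct_mulVec, vecMul_conjTranspose, hstar, hstar]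

lemma sspN_add (hFpsd : ∀ ℓ, (F ℓ).PosSemidef) (β γ : Fin p → ℝ) :
    sspN d F (β + γ) ≤ sspN d F β + sspN d F γ := by
  obtain ⟨B, hB⟩ := sspN_dot_eq F hFpsd
  have h1 : ∀ k, |d k ⬝ᵥ (β + γ)| ≤ |d k ⬝ᵥ β| + |d k ⬝ᵥ γ| := by
    intro k
    rw [dotProduct_add]
    exact abs_add_le _ _
  have h2 : ∀ ℓ, Real.sqrt ((β + γ) ⬝ᵥ (F ℓ) *ᵥ (β + γ))
      ≤ Real.sqrt (β ⬝ᵥ (F ℓ) *ᵥ β) + Real.sqrt (γ ⬝ᵥ (F ℓ) *ᵥ γ) := by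
    intro ℓ
    rw [hB ℓ, hB ℓ, hB ℓ, mulVec_add]
    exact sspAux_sqrt_dot_add_le _ _
  unfold sspN
  calc (∑ k, |d k ⬝ᵥ (β + γ)|) + ∑ ℓ, Real.sqrt ((β + γ) ⬝ᵥ (F ℓ) *ᵥ (β + γ))
      ≤ (∑ k, (|d k ⬝ᵥ β| + |d k ⬝ᵥ γ|))
        + ∑ ℓ, (Real.sqrt (β ⬝ᵥ (F ℓ) *ᵥ β) + Real.sqrt (γ ⬝ᵥ (F ℓ) *ᵥ γ)) := by
        gcongr <;> [exact h1 _; exact h2 _]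
    _ = _ := by rw [Finset.sum_add_distrib, Finset.sum_add_distrib]; ring

lemma sspN_continuous : Continuous (sspN d F) := by
  unfold sspN
  have hdot : ∀ v : Fin p → ℝ, Continuous fun β : Fin p → ℝ => v ⬝ᵥ β := by
    intro v
    simp only [dotProduct]
    fun_prop
  have hquad : ∀ ℓ, Continuous fun β : Fin p → ℝ => β ⬝ᵥ (F ℓ) *ᵥ β := by
    intro ℓ
    simp only [dotProduct, Matrix.mulVec]
    fun_prop
  exact (continuous_finset_sum _ fun k _ => (hdot (d k)).abs).add
    (continuous_finset_sum _ fun ℓ _ => Real.continuous_sqrt.comp (hquad ℓ))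

lemma sspN_eq_zero_iff (hFpsd : ∀ ℓ, (F ℓ).PosSemidef) (β : Fin p → ℝ) :
    sspN d F β = 0 ↔ (∀ k, d k ⬝ᵥ β = 0) ∧ (∀ ℓ, (F ℓ) *ᵥ β = 0) := by
  have hstar : star β = β := funext fun i => star_trivial _
  have hnn : ∀ ℓ, 0 ≤ β ⬝ᵥ (F ℓ) *ᵥ β := by
    intro ℓ
    have := (hFpsd ℓ).dotProduct_mulVec_nonneg β
    rwa [hstar] at this
  have hsq0 : ∀ ℓ, Real.sqrt (β ⬝ᵥ (F ℓ) *ᵥ β) = 0 ↔ (F ℓ) *ᵥ β = 0 := by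
    intro ℓ
    rw [Real.sqrt_eq_zero (hnn ℓ)]
    constructor
    · intro h
      exact ((hFpsd ℓ).dotProduct_mulVec_zero_iff β).mp (by rwa [hstar])
    · intro h
      rw [h, dotProduct_zero]
  constructor
  · intro h
    have h1 := (add_eq_zero_iff_of_nonneg (Finset.sum_nonneg fun _ _ => abs_nonneg _)
      (Finset.sum_nonneg fun _ _ => Real.sqrt_nonneg _)).mp h
    constructor
    · intro k
      have := (Finset.sum_eq_zero_iff_of_nonneg (fun k _ => abs_nonneg _)).mp h1.1 k
        (Finset.mem_univ k)
      exact abs_eq_zero.mp this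
    · intro ℓ
      have := (Finset.sum_eq_zero_iff_of_nonneg (fun _ _ => Real.sqrt_nonneg _)).mp h1.2 ℓ
        (Finset.mem_univ ℓ)
      exact (hsq0 ℓ).mp this
  · rintro ⟨h1, h2⟩
    unfold sspN
    rw [Finset.sum_eq_zero fun k _ => by rw [h1 k, abs_zero],
      Finset.sum_eq_zero fun ℓ _ => (hsq0 ℓ).mpr (h2 ℓ), add_zero]

end sspN

/-- The structured sparse kernel is integrable over ℝ^p iff the stacked matrix
`D̄` (rows `d₁ᵀ,…,d_Kᵀ` followed by the rows of `F₁,…,F_L`) has full column rank `p`. -/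
theorem structured_sparse_prior_proper_iff
    (p K L : ℕ) (lam : ℝ) (hlam : 0 < lam)
    (d : Fin K → (Fin p → ℝ))
    (F : Fin L → Matrix (Fin p) (Fin p) ℝ)
    (hFsymm : ∀ ℓ, (F ℓ).IsSymm)
    (hFpsd : ∀ ℓ, (F ℓ).PosSemidef) :
    Integrable (fun β : Fin p → ℝ =>
        Real.exp (-(lam * ((∑ k, |d k ⬝ᵥ β|) +
          ∑ ℓ, Real.sqrt (β ⬝ᵥ (F ℓ) *ᵥ β))))) volume ↔
      (Matrix.of (Sum.elim d (fun li : Fin L × Fin p => F li.1 li.2))).rank = p := by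
  classical
  set A : Matrix (Fin K ⊕ (Fin L × Fin p)) (Fin p) ℝ :=
    Matrix.of (Sum.elim d (fun li : Fin L × Fin p => F li.1 li.2)) with hA
  show Integrable (fun β : Fin p → ℝ => Real.exp (-(lam * sspN d F β))) volume ↔ A.rank = p
  -- kernel description of A
  have hA0 : ∀ x : Fin p → ℝ,
      A *ᵥ x = 0 ↔ ((∀ k, d k ⬝ᵥ x = 0) ∧ ∀ ℓ, (F ℓ) *ᵥ x = 0) := by
    intro x
    constructor
    · intro h
      constructor
      · intro k
        simpa [hA, Matrix.mulVec] using congrFun h (Sum.inl k)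
      · intro ℓ
        funext i
        simpa [hA, Matrix.mulVec] using congrFun h (Sum.inr (ℓ, i))
    · rintro ⟨h1, h2⟩
      funext i
      cases i with
      | inl k => simpa [hA, Matrix.mulVec] using h1 k
      | inr li =>
        have := congrFun (h2 li.1) li.2
        simpa [hA, Matrix.mulVec] using this
  have hNzero : ∀ β : Fin p → ℝ, sspN d F β = 0 ↔ A *ᵥ β = 0 := by
    intro β
    rw [hA0, sspN_eq_zero_iff d F hFpsd]
  have hfcont : Continuous fun β : Fin p → ℝ => Real.exp (-(lam * sspN d F β)) :=
    Real.continuous_exp.comp ((continuous_const.mul (sspN_continuous d F)).neg)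
  rcases Nat.eq_zero_or_pos p with hp | hp
  · subst hp
    constructor
    · intro _
      have h1 := Matrix.rank_le_card_width A
      simp only [Fintype.card_fin] at h1
      omega
    · intro _
      have hvol : (volume : Measure (Fin 0 → ℝ)) univ = 1 := by
        rw [volume_pi, Measure.pi_univ]
        simp
      haveI : IsFiniteMeasure (volume : Measure (Fin 0 → ℝ)) :=
        ⟨by rw [hvol]; exact ENNReal.one_lt_top⟩
      exact (integrable_const (Real.exp (-(lam * sspN d F 0)))).congr
        (ae_of_all _ fun x => by rw [Subsingleton.elim (0 : Fin 0 → ℝ) x])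
  · constructor
    · intro hint
      rw [sspAux_rank_iff]
      by_contra hcon
      push_neg at hcon
      obtain ⟨v, hv0, hvne⟩ := hcon
      refine sspAux_not_integrable _ hfcont (fun β => Real.exp_pos _) v hvne ?_ hint
      intro β t
      have hNv : sspN d F v = 0 := (hNzero v).mpr hv0
      have h1 : sspN d F (β + t • v) ≤ sspN d F β := by
        calc sspN d F (β + t • v) ≤ sspN d F β + sspN d F (t • v) := sspN_add d F hFpsd _ _
          _ = sspN d F β + |t| * sspN d F v := by rw [sspN_smul]
          _ = sspN d F β := by rw [hNv]; ring
      have h2 : sspN d F β ≤ sspN d F (β + t • v) := by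
        have heq : β = (β + t • v) + (-t) • v := by
          funext i
          simp only [Pi.add_apply, Pi.smul_apply, smul_eq_mul]
          ring
        calc sspN d F β = sspN d F ((β + t • v) + (-t) • v) := by rw [← heq]
          _ ≤ sspN d F (β + t • v) + sspN d F ((-t) • v) := sspN_add d F hFpsd _ _
          _ = sspN d F (β + t • v) + |(-t)| * sspN d F v := by rw [sspN_smul]
          _ = sspN d F (β + t • v) := by rw [hNv]; ring
      rw [le_antisymm h1 h2]
    · intro hrank
      have hkernel := (sspAux_rank_iff A).mp hrank
      have hNpos : ∀ β : Fin p → ℝ, β ≠ 0 → 0 < sspN d F β := by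
        intro β hb
        rcases (sspN_nonneg d F β).lt_or_eq with h | h
        · exact h
        · exact absurd (hkernel β ((hNzero β).mp h.symm)) hb
      haveI : Nonempty (Fin p) := ⟨⟨0, hp⟩⟩
      have hsne : (Metric.sphere (0 : Fin p → ℝ) 1).Nonempty :=
        NormedSpace.sphere_nonempty.mpr zero_le_one
      obtain ⟨β₀, hβ₀mem, hβ₀min⟩ := (isCompact_sphere (0 : Fin p → ℝ) 1).exists_isMinOn hsne
        (sspN_continuous d F).continuousOn
      have hβ₀ne : β₀ ≠ 0 := by
        intro h
        rw [h] at hβ₀mem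
        simp at hβ₀mem
      have hcpos : 0 < sspN d F β₀ := hNpos β₀ hβ₀ne
      set c := sspN d F β₀ with hc
      have hlow : ∀ β : Fin p → ℝ, c * ‖β‖ ≤ sspN d F β := by
        intro β
        rcases eq_or_ne β 0 with rfl | hb
        · simpa using sspN_nonneg d F 0
        · have hn : ‖β‖ ≠ 0 := norm_ne_zero_iff.mpr hb
          have hmem : ‖β‖⁻¹ • β ∈ Metric.sphere (0 : Fin p → ℝ) 1 := by
            simp [norm_smul, abs_of_nonneg (inv_nonneg.mpr (norm_nonneg β)),
              inv_mul_cancel₀ hn]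
          have hle : c ≤ sspN d F (‖β‖⁻¹ • β) := hβ₀min hmem
          have heq : sspN d F (‖β‖⁻¹ • β) = ‖β‖⁻¹ * sspN d F β := by
            rw [sspN_smul, abs_of_nonneg (inv_nonneg.mpr (norm_nonneg β))]
          rw [heq] at hle
          calc c * ‖β‖ ≤ (‖β‖⁻¹ * sspN d F β) * ‖β‖ :=
                mul_le_mul_of_nonneg_right hle (norm_nonneg β)
            _ = sspN d F β := by field_simp
      set a := lam * c / p with ha
      have hppos : (0 : ℝ) < p := by exact_mod_cast hp
      have hap : 0 < a := div_pos (mul_pos hlam hcpos) hppos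
      have hgint : Integrable (fun β : Fin p → ℝ => ∏ i, Real.exp (-(a * |β i|))) volume :=
        Integrable.fintype_prod fun _ => sspAux_integrable_exp_abs hap
      refine hgint.mono hfcont.aestronglyMeasurable (ae_of_all _ fun β => ?_)
      rw [Real.norm_eq_abs, Real.norm_eq_abs, abs_of_pos (Real.exp_pos _),
        abs_of_pos (Finset.prod_pos fun _ _ => Real.exp_pos _), ← Real.exp_sum]
      apply Real.exp_le_exp.mpr
      have hsum : ∑ i, -(a * |β i|) = -(a * ∑ i, |β i|) := by
        rw [Finset.mul_sum, ← Finset.sum_neg_distrib]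
      rw [hsum, neg_le_neg_iff]
      have h1 : ∑ i, |β i| ≤ (p : ℝ) * ‖β‖ := by
        calc ∑ i, |β i| ≤ ∑ _i : Fin p, ‖β‖ :=
              Finset.sum_le_sum fun i _ => by simpa using norm_le_pi_norm β i
          _ = (p : ℝ) * ‖β‖ := by
              simp [Finset.sum_const, Finset.card_univ, nsmul_eq_mul]
      calc a * ∑ i, |β i| ≤ a * ((p : ℝ) * ‖β‖) :=
            mul_le_mul_of_nonneg_left h1 hap.le
        _ = lam * (c * ‖β‖) := by
            rw [ha]
            field_simp
        _ ≤ lam * sspN d F β := mul_le_mul_of_nonneg_left (hlow β) hlam.le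
end

section
/- Let λ > 0 and let A be a real m×p matrix with rank(A) < p. Then ∫_{ℝ^p} exp(−λ ‖Aβ‖₁) dβ = ∞, where ‖·‖₁ denotes the ℓ₁ norm on ℝ^m. -/
open MeasureTheory Matrix

/-- If `A` is an `m × p` real matrix with rank strictly less than `p`, then for any `λ > 0`
the integral of `exp(−λ‖Aβ‖₁)` over ℝ^p is infinite. -/
theorem lintegral_exp_neg_l1_rank_deficient_eq_top
    (m p : ℕ) (lam : ℝ) (hlam : 0 < lam)
    (A : Matrix (Fin m) (Fin p) ℝ) (hA : A.rank < p) :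
    ∫⁻ β : Fin p → ℝ,
      ENNReal.ofReal (Real.exp (-(lam * ∑ i, |(A *ᵥ β) i|))) = ⊤ := by
  classical
  set F : (Fin p → ℝ) → ENNReal :=
    fun β => ENNReal.ofReal (Real.exp (-(lam * ∑ i, |(A *ᵥ β) i|))) with hF_def
  -- find a nonzero kernel vector
  have hker : LinearMap.ker A.mulVecLin ≠ ⊥ := by
    intro h
    have h1 := LinearMap.finrank_range_add_finrank_ker A.mulVecLin
    rw [h, finrank_bot, add_zero, Module.finrank_fin_fun] at h1
    rw [Matrix.rank, h1] at hA
    exact lt_irrefl _ hA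
  obtain ⟨v0, hv0mem, hv0⟩ := (Submodule.ne_bot_iff _).mp hker
  have hAv0 : A *ᵥ v0 = 0 := hv0mem
  obtain ⟨j, hj⟩ := Function.ne_iff.mp hv0
  simp only [Pi.zero_apply] at hj
  set v : Fin p → ℝ := (v0 j)⁻¹ • v0 with hv_def
  have hAv : A *ᵥ v = 0 := by
    rw [hv_def, Matrix.mulVec_smul, hAv0, smul_zero]
  have hvj : v j = 1 := by
    simp [hv_def, inv_mul_cancel₀ hj]
  set w : Fin p → ℝ := v - (Pi.single j 1 : Fin p → ℝ) with hw_def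
  have hwj : w j = 0 := by simp [hw_def, hvj]
  set M : Matrix (Fin p) (Fin p) ℝ := 1 + replicateCol Unit w * replicateRow Unit ((Pi.single j 1 : Fin p → ℝ)) with hM_def
  have hdet : M.det = 1 := by
    rw [hM_def, Matrix.det_one_add_replicateCol_mul_replicateRow]
    simp [dotProduct, Pi.single_apply, hwj]
  have hMβ : ∀ β : Fin p → ℝ, M *ᵥ β = β + β j • w := by
    intro β
    rw [hM_def, Matrix.add_mulVec, Matrix.one_mulVec, ← Matrix.mulVec_mulVec]
    congr 1
    funext i
    simp [Matrix.mulVec, dotProduct, Matrix.replicateCol, Matrix.replicateRow, Pi.single_apply,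
      mul_comm]
  have hupdate : ∀ β : Fin p → ℝ, Function.update β j 0 = β - β j • (Pi.single j 1 : Fin p → ℝ) := by
    intro β
    funext k
    by_cases hk : k = j
    · subst hk; simp
    · simp [Function.update_of_ne hk, Pi.single_apply, hk]
  have hAM : ∀ β : Fin p → ℝ, A *ᵥ (M *ᵥ β) = A *ᵥ Function.update β j 0 := by
    intro β
    rw [hMβ, hupdate]
    rw [Matrix.mulVec_add, Matrix.mulVec_smul, hw_def, Matrix.mulVec_sub, hAv]
    rw [Matrix.mulVec_sub, Matrix.mulVec_smul]
    simp [sub_eq_add_neg]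
  -- the shear is measure preserving
  have hdetlin : LinearMap.det M.mulVecLin = 1 := by
    rw [← Matrix.toLin'_apply', LinearMap.det_toLin', hdet]
  have hmp : MeasurePreserving (M.mulVecLin) (volume : Measure (Fin p → ℝ)) volume := by
    refine ⟨M.mulVecLin.continuous_of_finiteDimensional.measurable, ?_⟩
    rw [Real.map_linearMap_volume_pi_eq_smul_volume_pi (by rw [hdetlin]; norm_num)]
    simp [hdetlin]
  have hFmeas : Measurable F := by
    have hcont : Continuous fun β : Fin p → ℝ => ∑ i, |(A *ᵥ β) i| := by
      apply continuous_finset_sum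
      intro i _
      have : Continuous fun β : Fin p → ℝ => (A *ᵥ β) i := by
        have := A.mulVecLin.continuous_of_finiteDimensional
        exact (continuous_apply i).comp this
      exact this.abs
    exact (ENNReal.continuous_ofReal.comp
      (Real.continuous_exp.comp ((continuous_const.mul hcont).neg))).measurable
  have key : ∫⁻ β, F β = ∫⁻ β, F (Function.update β j 0) := by
    rw [← hmp.lintegral_comp hFmeas]
    refine lintegral_congr fun β => ?_
    simp only [hF_def, Matrix.mulVecLin_apply, hAM β]
  -- lower bound by an indicator of an infinite-volume box
  set C : ℝ := ∑ i, ∑ k, |A i k| with hC_def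
  set c : ENNReal := ENNReal.ofReal (Real.exp (-(lam * C))) with hc_def
  set s : Fin p → Set ℝ := fun i => if i = j then Set.univ else Set.Icc (-1 : ℝ) 1 with hs_def
  set T : Set (Fin p → ℝ) := Set.pi Set.univ s with hT_def
  have hTmeas : MeasurableSet T := by
    apply MeasurableSet.univ_pi
    intro i
    by_cases hi : i = j <;> simp [hs_def, hi]
  have hbound : ∀ β ∈ T, c ≤ F (Function.update β j 0) := by
    intro β hβ
    have hcoord : ∀ k, |Function.update β j 0 k| ≤ 1 := by
      intro k
      by_cases hk : k = j
      · subst hk; simp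
      · rw [Function.update_of_ne hk]
        have := hβ k (Set.mem_univ k)
        simp only [hs_def, if_neg hk] at this
        rw [abs_le]; exact ⟨this.1, this.2⟩
    have hsum : ∑ i, |(A *ᵥ Function.update β j 0) i| ≤ C := by
      apply Finset.sum_le_sum
      intro i _
      simp only [Matrix.mulVec, dotProduct]
      calc |∑ k, A i k * Function.update β j 0 k| ≤ ∑ k, |A i k * Function.update β j 0 k| :=
            Finset.abs_sum_le_sum_abs _ _
        _ ≤ ∑ k, |A i k| := by
            apply Finset.sum_le_sum
            intro k _
            rw [abs_mul]
            calc |A i k| * |Function.update β j 0 k| ≤ |A i k| * 1 :=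
                  mul_le_mul_of_nonneg_left (hcoord k) (abs_nonneg _)
              _ = |A i k| := mul_one _
    apply ENNReal.ofReal_le_ofReal
    apply Real.exp_le_exp.mpr
    rw [neg_le_neg_iff]
    exact mul_le_mul_of_nonneg_left hsum hlam.le
  have hvolT : volume T = ⊤ := by
    rw [hT_def, volume_pi_pi]
    rw [← Finset.prod_erase_mul _ _ (Finset.mem_univ j)]
    have h1 : volume (s j) = ⊤ := by simp [hs_def]
    rw [h1, ENNReal.mul_top]
    rw [Finset.prod_ne_zero_iff]
    intro i hi
    have hij : i ≠ j := Finset.ne_of_mem_erase hi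
    simp [hs_def, hij, Real.volume_Icc]
  have hge : (⊤ : ENNReal) ≤ ∫⁻ β, F (Function.update β j 0) := by
    calc (⊤ : ENNReal) = c * volume T := by
          rw [hvolT, ENNReal.mul_top]
          simp [hc_def, Real.exp_pos]
      _ = ∫⁻ β, T.indicator (fun _ => c) β := by rw [lintegral_indicator_const hTmeas]
      _ ≤ ∫⁻ β, F (Function.update β j 0) := by
          apply lintegral_mono
          intro β
          by_cases hβ : β ∈ T
          · rw [Set.indicator_of_mem hβ]; exact hbound β hβ
          · rw [Set.indicator_of_notMem hβ]; exact zero_le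
  rw [show (∫⁻ β : Fin p → ℝ,
      ENNReal.ofReal (Real.exp (-(lam * ∑ i, |(A *ᵥ β) i|)))) = ∫⁻ β, F β from rfl, key]
  exact top_le_iff.mp hge
end

section
/- Let f : ℝ^p → [0,∞] be Lebesgue measurable and suppose there is a nonzero vector v ∈ ℝ^p such that f(β + t·v) = f(β) for all β ∈ ℝ^p and all t ∈ ℝ. If f is not almost everywhere zero (equivalently, ∫_{ℝ^p} f dβ > 0), then ∫_{ℝ^p} f dβ = ∞. -/
open MeasureTheory

/-- A nonnegative measurable function on ℝ^p that is invariant along a nonzero direction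
and is not almost everywhere zero has infinite Lebesgue integral. -/
theorem lintegral_eq_top_of_translation_invariant_direction
    (p : ℕ) (f : (Fin p → ℝ) → ENNReal) (hf : Measurable f)
    (v : Fin p → ℝ) (hv : v ≠ 0)
    (hinv : ∀ (β : Fin p → ℝ) (t : ℝ), f (β + t • v) = f β)
    (hpos : 0 < ∫⁻ β : Fin p → ℝ, f β) :
    ∫⁻ β : Fin p → ℝ, f β = ⊤ := by
  obtain ⟨i, hi⟩ : ∃ i, v i ≠ 0 := by
    by_contra h
    push_neg at h
    exact hv (funext h)
  set φ : (Fin p → ℝ) → ℝ := fun x => x i / v i with hφ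
  have hφm : Measurable φ := (measurable_pi_apply i).div_const _
  set A : ℤ → Set (Fin p → ℝ) := fun n => φ ⁻¹' Set.Ico (n : ℝ) (n + 1) with hA
  have hAm : ∀ n, MeasurableSet (A n) := fun n => hφm measurableSet_Ico
  have hUnion : (⋃ n, A n) = Set.univ := by
    ext x
    simp only [Set.mem_iUnion, Set.mem_univ, iff_true, hA, Set.mem_preimage,
      Set.mem_Ico]
    exact ⟨⌊φ x⌋, Int.floor_le _, Int.lt_floor_add_one _⟩
  have hDisj : Pairwise (Function.onFun Disjoint A) := by
    intro m n hmn
    refine Set.disjoint_left.2 fun x hxm hxn => hmn ?_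
    simp only [hA, Set.mem_preimage, Set.mem_Ico] at hxm hxn
    have h1 : m = ⌊φ x⌋ := by
      rw [eq_comm, Int.floor_eq_iff]
      · exact ⟨hxm.1, hxm.2⟩
    have h2 : n = ⌊φ x⌋ := by
      rw [eq_comm, Int.floor_eq_iff]
      · exact ⟨hxn.1, hxn.2⟩
    rw [h1, h2]
  have hpre : ∀ n : ℤ, (fun x => x + (n : ℝ) • v) ⁻¹' A n = A 0 := by
    intro n
    ext x
    have hφx : φ (x + (n : ℝ) • v) = φ x + n := by
      simp only [hφ, Pi.add_apply, Pi.smul_apply, smul_eq_mul]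
      field_simp
    simp only [hA, Set.mem_preimage, Set.mem_Ico, hφx, Int.cast_zero]
    constructor
    · rintro ⟨h1, h2⟩
      constructor <;> linarith
    · rintro ⟨h1, h2⟩
      constructor <;> linarith
  have hslab : ∀ n : ℤ, ∫⁻ x in A n, f x = ∫⁻ x in A 0, f x := by
    intro n
    have hT := measurePreserving_add_right (volume : Measure (Fin p → ℝ)) ((n : ℝ) • v)
    calc ∫⁻ x in A n, f x
        = ∫⁻ x in A n, f x ∂(Measure.map (fun x => x + (n : ℝ) • v) volume) := by
          rw [hT.map_eq]
      _ = ∫⁻ x in (fun x => x + (n : ℝ) • v) ⁻¹' A n, f (x + (n : ℝ) • v) := by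
          exact setLIntegral_map (hAm n) hf (measurable_add_const _)
      _ = ∫⁻ x in A 0, f x := by
          rw [hpre n]
          exact setLIntegral_congr_fun (hAm 0)
            (fun x _ => hinv x n)
  have hsum : ∫⁻ β : Fin p → ℝ, f β = ∑' n : ℤ, ∫⁻ x in A n, f x := by
    rw [← lintegral_iUnion hAm hDisj, hUnion, Measure.restrict_univ]
  rw [hsum] at hpos ⊢
  simp only [hslab] at hpos ⊢
  have hc : ∫⁻ x in A 0, f x ≠ 0 := by
    intro h
    rw [h, tsum_zero] at hpos
    exact lt_irrefl _ hpos
  exact ENNReal.tsum_const_eq_top_of_ne_zero hc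
end

section
/- Let L : ℝ^N → [0,∞) be measurable, let X be a real N×p matrix, let λ > 0, let d₁,…,d_K ∈ ℝ^p, and let F₁,…,F_L be symmetric positive semidefinite real p×p matrices with stacked matrix D̄. Suppose the stacked (N+K+Lp)×p matrix obtained by stacking X on top of D̄ has rank strictly less than p, and suppose ∫_{ℝ^p} L(Xβ) · k(β) dβ > 0, where k is the structured sparse kernel. Then ∫_{ℝ^p} L(Xβ) · k(β) dβ = ∞; i.e., condition (a) of Theorem 2 (full rank of the augmented design) is necessary for posterior propriety. -/
open MeasureTheory Matrix

lemma lintegral_eq_top_of_translation_invariant {p : ℕ}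
    (f : (Fin p → ℝ) → ENNReal) (hf : Measurable f)
    (v : Fin p → ℝ) (hv : v ≠ 0)
    (hinv : ∀ (t : ℝ) (β : Fin p → ℝ), f (β + t • v) = f β)
    (hpos : 0 < ∫⁻ β, f β) : ∫⁻ β, f β = ⊤ := by
  classical
  obtain ⟨j, hj⟩ : ∃ j, v j ≠ 0 := Function.ne_iff.mp hv
  set w : Fin p → ℝ := (v j)⁻¹ • v with hw
  have hwj : w j = 1 := by simp [hw, inv_mul_cancel₀ hj]
  have hinvw : ∀ (t : ℝ) (β : Fin p → ℝ), f (β + t • w) = f β := by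
    intro t β
    have : t • w = (t * (v j)⁻¹) • v := by rw [hw, smul_smul]
    rw [this, hinv]
  set u : Fin p → ℝ := w - Pi.single j 1 with hu
  have huj : u j = 0 := by simp [hu, hwj]
  -- the shear map
  set S : (Fin p → ℝ) →ₗ[ℝ] (Fin p → ℝ) :=
    LinearMap.id + (LinearMap.proj j).smulRight u with hS
  set S' : (Fin p → ℝ) →ₗ[ℝ] (Fin p → ℝ) :=
    LinearMap.id + (LinearMap.proj j).smulRight (-u) with hS'
  have hSapp : ∀ β, S β = β + β j • u := fun β => rfl
  have hS'app : ∀ β, S' β = β - β j • u := by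
    intro β; show β + β j • (-u) = β - β j • u; rw [smul_neg, ← sub_eq_add_neg]
  have hcomp1 : ∀ β, S (S' β) = β := by
    intro β
    rw [hS'app, hSapp]
    have hb : (β - β j • u) j = β j := by simp [huj]
    rw [hb]; abel
  have hcomp2 : ∀ β, S' (S β) = β := by
    intro β
    rw [hSapp, hS'app]
    have hb : (β + β j • u) j = β j := by simp [huj]
    rw [hb]; abel
  have hdet : LinearMap.det S ≠ 0 := by
    have : IsUnit (LinearMap.det ((LinearEquiv.ofLinear S S'
        (LinearMap.ext hcomp1) (LinearMap.ext hcomp2)) : (Fin p → ℝ) →ₗ[ℝ] (Fin p → ℝ))) :=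
      LinearEquiv.isUnit_det' _
    simpa using this.ne_zero
  set c : ENNReal := ENNReal.ofReal |(LinearMap.det S)⁻¹| with hc
  have hc0 : c ≠ 0 := by
    simp only [hc, ne_eq, ENNReal.ofReal_eq_zero, not_le]
    positivity
  have hctop : c ≠ ⊤ := ENNReal.ofReal_ne_top
  have hSmeas : Measurable S := S.continuous_of_finiteDimensional.measurable
  have hmap : Measure.map S volume = c • volume :=
    Measure.map_linearMap_addHaar_eq_smul_addHaar volume hdet
  have key : ∫⁻ β, f (S β) = c * ∫⁻ β, f β := by
    rw [← lintegral_map hf hSmeas, hmap, lintegral_smul_measure, smul_eq_mul]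
  -- S β depends only on the coordinates away from j
  have hgind : ∀ β β' : Fin p → ℝ, (∀ i, i ≠ j → β i = β' i) → f (S β) = f (S β') := by
    intro β β' h
    have key' : ∀ γ : Fin p → ℝ, f (S γ) = f (γ - γ j • (Pi.single j 1 : Fin p → ℝ)) := by
      intro γ
      rw [hSapp]
      have : γ + γ j • u = (γ - γ j • (Pi.single j 1 : Fin p → ℝ)) + γ j • w := by
        rw [hu]; rw [smul_sub]; abel
      rw [this, hinvw]
    rw [key' β, key' β']
    congr 1
    funext i
    by_cases hi : i = j
    · subst hi; simp
    · simp [Pi.single_apply, hi, h i hi]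
  -- split off coordinate j via Fubini
  obtain ⟨q, hq⟩ : ∃ q' : Fin p → Prop, q' = fun i => i = j := ⟨_, rfl⟩
  haveI : DecidablePred q := fun i => decidable_of_iff (i = j) (by rw [hq])
  set e := MeasurableEquiv.piEquivPiSubtypeProd (fun _ : Fin p => ℝ) q with he
  have hmp := volume_preserving_piEquivPiSubtypeProd (fun _ : Fin p => ℝ) q
  have hgm : Measurable fun β => f (S β) := hf.comp hSmeas
  have h1 := (hmp.symm e).lintegral_comp hgm
  have h2 : (∫⁻ z, f (S (e.symm z))) = ∫⁻ x, ∫⁻ y, f (S (e.symm (x, y))) := by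
    rw [Measure.volume_eq_prod]
    exact lintegral_prod _ ((hgm.comp e.symm.measurable).aemeasurable)
  replace h2 : ∫⁻ β, f (S β) = ∫⁻ x, ∫⁻ y, f (S (e.symm (x, y))) := h1.symm.trans h2
  have hindep : ∀ x x' y, f (S (e.symm (x, y))) = f (S (e.symm (x', y))) := by
    intro x x' y
    apply hgind
    intro i hi
    have hqi : ¬ q i := by rw [hq]; exact hi
    simp only [he, MeasurableEquiv.piEquivPiSubtypeProd_symm_apply,
      Equiv.piEquivPiSubtypeProd_symm_apply]
    rw [dif_neg hqi, dif_neg hqi]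
  haveI : Nonempty (Subtype q) := ⟨⟨j, by rw [hq]⟩⟩
  set x₀ : Subtype q → ℝ := fun _ => 0 with hx₀
  set C : ENNReal := ∫⁻ y, f (S (e.symm (x₀, y))) with hC
  have h3 : ∀ x, (∫⁻ y, f (S (e.symm (x, y)))) = C := by
    intro x
    rw [hC]
    congr 1
    funext y
    exact hindep x _ y
  simp only [h3, lintegral_const] at h2
  have htopuniv : (volume : Measure (Subtype q → ℝ)) Set.univ = ⊤ := by
    haveI : Unique (Subtype q) := ⟨⟨⟨j, by rw [hq]⟩⟩, fun a => Subtype.ext (by have h6 := a.2; simp only [hq] at h6; exact h6)⟩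
    rw [volume_pi, Measure.pi_univ]
    simp
  rw [htopuniv] at h2
  -- h2 : ∫⁻ β, f (S β) = C * ⊤
  rw [key] at h2
  have hCne : C ≠ 0 := by
    intro h0
    rw [h0, zero_mul] at h2
    exact absurd h2 (by
      have : 0 < c * ∫⁻ β, f β := ENNReal.mul_pos hc0 hpos.ne'
      exact this.ne')
  rw [ENNReal.mul_top hCne] at h2
  by_contra hne
  exact (ENNReal.mul_ne_top hctop hne) h2

/-- Necessity of condition (a): if the augmented design (X stacked on D̄) is rank deficient
and the posterior kernel `L(Xβ)·k(β)` is not a.e. zero, its integral over ℝ^p is infinite. -/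
theorem posterior_improper_of_rank_deficient_augmented_design
    (N p K L : ℕ) (Lik : (Fin N → ℝ) → ℝ)
    (hLik_meas : Measurable Lik) (hLik_nonneg : ∀ η, 0 ≤ Lik η)
    (X : Matrix (Fin N) (Fin p) ℝ) (lam : ℝ) (hlam : 0 < lam)
    (d : Fin K → (Fin p → ℝ))
    (F : Fin L → Matrix (Fin p) (Fin p) ℝ)
    (hFsymm : ∀ ℓ, (F ℓ).IsSymm)
    (hFpsd : ∀ ℓ, (F ℓ).PosSemidef)
    (hrank : (Matrix.of (Sum.elim (fun n => X n)
        (Sum.elim d (fun li : Fin L × Fin p => F li.1 li.2)))).rank < p)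
    (hpos : 0 < ∫⁻ β : Fin p → ℝ,
        ENNReal.ofReal (Lik (X *ᵥ β) *
          Real.exp (-(lam * ((∑ k, |d k ⬝ᵥ β|) +
            ∑ ℓ, Real.sqrt (β ⬝ᵥ (F ℓ) *ᵥ β)))))) :
    ∫⁻ β : Fin p → ℝ,
        ENNReal.ofReal (Lik (X *ᵥ β) *
          Real.exp (-(lam * ((∑ k, |d k ⬝ᵥ β|) +
            ∑ ℓ, Real.sqrt (β ⬝ᵥ (F ℓ) *ᵥ β))))) = ⊤ := by
  classical
  set M : Matrix (Fin N ⊕ (Fin K ⊕ Fin L × Fin p)) (Fin p) ℝ :=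
    Matrix.of (Sum.elim (fun n => X n)
      (Sum.elim d (fun li : Fin L × Fin p => F li.1 li.2))) with hM
  -- get a nonzero kernel vector
  obtain ⟨v, hv0, hMv⟩ : ∃ v : Fin p → ℝ, v ≠ 0 ∧ M *ᵥ v = 0 := by
    have hrn := LinearMap.finrank_range_add_finrank_ker M.mulVecLin
    have hfr : Module.finrank ℝ (Fin p → ℝ) = p := by simp
    rw [hfr] at hrn
    have hker : 0 < Module.finrank ℝ (LinearMap.ker M.mulVecLin) := by
      have : Matrix.rank M = Module.finrank ℝ (LinearMap.range M.mulVecLin) := rfl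
      omega
    obtain ⟨x, hx⟩ := Module.finrank_pos_iff_exists_ne_zero.mp hker
    exact ⟨x.1, by simpa [Submodule.coe_eq_zero] using hx, x.2⟩
  have hXv : X *ᵥ v = 0 := funext fun n => congrFun hMv (Sum.inl n)
  have hdv : ∀ k, d k ⬝ᵥ v = 0 := fun k => congrFun hMv (Sum.inr (Sum.inl k))
  have hFv : ∀ ℓ, F ℓ *ᵥ v = 0 := fun ℓ =>
    funext fun i => congrFun hMv (Sum.inr (Sum.inr (ℓ, i)))
  set f : (Fin p → ℝ) → ENNReal := fun β =>
    ENNReal.ofReal (Lik (X *ᵥ β) *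
      Real.exp (-(lam * ((∑ k, |d k ⬝ᵥ β|) +
        ∑ ℓ, Real.sqrt (β ⬝ᵥ (F ℓ) *ᵥ β))))) with hf
  -- continuity helpers
  have hc1 : ∀ (ww : Fin p → ℝ), Continuous fun β : Fin p → ℝ => ww ⬝ᵥ β := by
    intro ww
    simp only [dotProduct]
    exact continuous_finset_sum _ fun i _ => continuous_const.mul (continuous_apply i)
  have hc2 : ∀ ℓ, Continuous fun β : Fin p → ℝ => β ⬝ᵥ F ℓ *ᵥ β := by
    intro ℓ
    have hrw : (fun β : Fin p → ℝ => β ⬝ᵥ F ℓ *ᵥ β)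
        = fun β => ∑ i, β i * (F ℓ i ⬝ᵥ β) := by
      funext β; simp [dotProduct, Matrix.mulVec]
    rw [hrw]
    exact continuous_finset_sum _ fun i _ => (continuous_apply i).mul (hc1 _)
  have hcexp : Continuous fun β : Fin p → ℝ =>
      Real.exp (-(lam * ((∑ k, |d k ⬝ᵥ β|) +
        ∑ ℓ, Real.sqrt (β ⬝ᵥ (F ℓ) *ᵥ β)))) := by
    apply Real.continuous_exp.comp
    apply Continuous.neg
    apply continuous_const.mul
    apply Continuous.add
    · exact continuous_finset_sum _ fun k _ => (hc1 (d k)).abs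
    · exact continuous_finset_sum _ fun ℓ _ => Real.continuous_sqrt.comp (hc2 ℓ)
  have hXmeas : Measurable fun β : Fin p → ℝ => X *ᵥ β :=
    measurable_pi_lambda _ fun n => (hc1 (X n)).measurable
  have hfmeas : Measurable f :=
    ENNReal.measurable_ofReal.comp ((hLik_meas.comp hXmeas).mul hcexp.measurable)
  -- invariance
  have hinv : ∀ (t : ℝ) (β : Fin p → ℝ), f (β + t • v) = f β := by
    intro t β
    have e1 : X *ᵥ (β + t • v) = X *ᵥ β := by
      rw [Matrix.mulVec_add, Matrix.mulVec_smul, hXv]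
      simp
    have e2 : ∀ k, d k ⬝ᵥ (β + t • v) = d k ⬝ᵥ β := by
      intro k
      rw [dotProduct_add, dotProduct_smul, hdv k]
      simp
    have e3 : ∀ ℓ, (β + t • v) ⬝ᵥ F ℓ *ᵥ (β + t • v) = β ⬝ᵥ F ℓ *ᵥ β := by
      intro ℓ
      have h4 : F ℓ *ᵥ (β + t • v) = F ℓ *ᵥ β := by
        rw [Matrix.mulVec_add, Matrix.mulVec_smul, hFv ℓ]
        simp
      rw [h4, add_dotProduct, smul_dotProduct]
      have h5 : v ⬝ᵥ F ℓ *ᵥ β = 0 := by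
        rw [Matrix.dotProduct_mulVec]
        have : v ᵥ* F ℓ = 0 := by
          rw [← Matrix.mulVec_transpose, (hFsymm ℓ).eq, hFv ℓ]
        rw [this, zero_dotProduct]
      rw [h5]
      simp
    simp only [hf, e1, e2, e3]
  exact lintegral_eq_top_of_translation_invariant f hfmeas v hv0 hinv hpos
end

section
/- For every λ > 0 and every z ∈ ℝ, ∫₀^∞ (2πτ)^{−1/2} exp(−z²/(2τ) − λ²τ/2) · (λ²/2) dτ = (λ/2) · exp(−λ|z|). -/
open MeasureTheory

open Real Set in

lemma glasser_aux (α β : ℝ) (hα : 0 < α) (hβ : 0 ≤ β) :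
    ∫ s in Ioi (0:ℝ), Real.exp (-(α * s - β / s) ^ 2) = Real.sqrt π / (2 * α) := by
  rcases eq_or_lt_of_le hβ with hβ0 | hβ
  · -- β = 0
    have h : ∀ s ∈ Ioi (0:ℝ), Real.exp (-(α * s - β / s) ^ 2)
        = Real.exp (-(α^2) * s ^ 2) := by
      intro s hs
      rw [← hβ0]
      congr 1; ring
    rw [setIntegral_congr_fun measurableSet_Ioi h, integral_gaussian_Ioi]
    rw [Real.sqrt_div pi_pos.le, Real.sqrt_sq hα.le]
    ring
  · set f : ℝ → ℝ := fun s => α * s - β / s with hf_def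
    have hf' : ∀ x ∈ Ioi (0:ℝ), HasDerivWithinAt f (α + β / x ^ 2) (Ioi 0) x := by
      intro x hx
      have hx0 : x ≠ 0 := (mem_Ioi.mp hx).ne'
      have h : HasDerivAt f (α * 1 - β * -(x ^ 2)⁻¹) x := by
        simpa [hf_def, div_eq_mul_inv, Pi.sub_def] using
          ((hasDerivAt_id x).const_mul α).sub ((hasDerivAt_inv hx0).const_mul β)
      have h2 : α * 1 - β * -(x ^ 2)⁻¹ = α + β / x ^ 2 := by field_simp; ring
      rw [h2] at h
      exact h.hasDerivWithinAt
    have hinj : InjOn f (Ioi 0) := by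
      have hmono : StrictMonoOn f (Ioi 0) := by
        intro a ha b hb hab
        simp only [hf_def]
        have ha' : (0:ℝ) < a := ha
        have h1 : α * a < α * b := by nlinarith
        have h2 : β / b ≤ β / a := by gcongr
        linarith
      exact hmono.injOn
    have himg : f '' Ioi 0 = univ := by
      ext y
      simp only [mem_univ, iff_true, mem_image]
      set D := Real.sqrt (y ^ 2 + 4 * α * β) with hD_def
      have hDsq : D ^ 2 = y ^ 2 + 4 * α * β := Real.sq_sqrt (by positivity)
      have hD : |y| < D := by
        have h1 : y ^ 2 < y ^ 2 + 4 * α * β := by nlinarith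
        calc |y| = Real.sqrt (y ^ 2) := (Real.sqrt_sq_eq_abs y).symm
        _ < D := Real.sqrt_lt_sqrt (sq_nonneg y) h1
      have hyD : 0 < y + D := by
        have := neg_abs_le y
        linarith
      have hs : 0 < (y + D) / (2 * α) := by positivity
      refine ⟨(y + D) / (2 * α), hs, ?_⟩
      simp only [hf_def]
      field_simp [hyD.ne']
      nlinarith [hDsq]
    have key : ∫ u in f '' Ioi 0, Real.exp (-u ^ 2)
        = ∫ s in Ioi (0:ℝ), |α + β / s ^ 2| • Real.exp (-(f s) ^ 2) :=
      integral_image_eq_integral_abs_deriv_smul measurableSet_Ioi hf' hinj _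
    have gauss : ∫ u in f '' Ioi 0, Real.exp (-u ^ 2) = Real.sqrt π := by
      rw [himg, setIntegral_univ]
      simpa using integral_gaussian 1
    have hgauss_int : Integrable (fun u : ℝ => Real.exp (-u ^ 2)) := by
      have := integrable_exp_neg_mul_sq (b := 1) one_pos
      simpa using this
    have hInt : IntegrableOn (fun s => |α + β / s ^ 2| • Real.exp (-(f s) ^ 2)) (Ioi 0) := by
      have h0 : IntegrableOn (fun u : ℝ => Real.exp (-u ^ 2)) (f '' Ioi 0) :=
        hgauss_int.integrableOn
      exact (integrableOn_image_iff_integrableOn_abs_deriv_smul measurableSet_Ioi hf' hinj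
        (fun u => Real.exp (-u ^ 2))).mp h0
    set e : ℝ → ℝ := fun s => Real.exp (-(α * s - β / s) ^ 2) with he_def
    have hcont : ContinuousOn e (Ioi 0) := by
      apply Real.continuous_exp.comp_continuousOn
      apply ContinuousOn.neg
      apply ContinuousOn.pow
      exact (continuous_const.mul continuous_id).continuousOn.sub
        (continuousOn_const.div continuousOn_id (fun x hx => ne_of_gt hx))
    have he_meas : AEStronglyMeasurable e (volume.restrict (Ioi 0)) :=
      hcont.aestronglyMeasurable measurableSet_Ioi
    have habs : ∀ s ∈ Ioi (0:ℝ), |α + β / s ^ 2| = α + β / s ^ 2 := by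
      intro s hs
      have hs0 : (0:ℝ) < s := hs
      rw [abs_of_pos]
      positivity
    have hfe : ∀ s : ℝ, Real.exp (-(f s) ^ 2) = e s := fun s => rfl
    have hIe : IntegrableOn e (Ioi 0) := by
      apply Integrable.mono' (hInt.const_mul α⁻¹) he_meas
      filter_upwards [ae_restrict_mem measurableSet_Ioi] with s hs
      have hs0 : (0:ℝ) < s := hs
      have hb : (0:ℝ) ≤ β / s ^ 2 := by positivity
      rw [Real.norm_eq_abs, abs_of_pos (Real.exp_pos _), smul_eq_mul, habs s hs, hfe]
      have h1 : (1:ℝ) ≤ α⁻¹ * (α + β / s ^ 2) := by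
        rw [inv_mul_eq_div, le_div_iff₀ hα]; linarith
      nlinarith [Real.exp_pos (-(α * s - β / s) ^ 2)]
    have hI2 : IntegrableOn (fun s => β / s ^ 2 * e s) (Ioi 0) := by
      apply Integrable.mono' hInt
      · apply ContinuousOn.aestronglyMeasurable _ measurableSet_Ioi
        exact (continuousOn_const.div (continuousOn_id.pow 2)
          (fun x hx => pow_ne_zero 2 (ne_of_gt hx))).mul hcont
      · filter_upwards [ae_restrict_mem measurableSet_Ioi] with s hs
        have hs0 : (0:ℝ) < s := hs
        rw [Real.norm_eq_abs, smul_eq_mul, habs s hs, hfe,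
          abs_of_nonneg (by positivity)]
        nlinarith [Real.exp_pos (-(α * s - β / s) ^ 2)]
    have hsplit : Real.sqrt π
        = α * (∫ s in Ioi (0:ℝ), e s) + ∫ s in Ioi (0:ℝ), β / s ^ 2 * e s := by
      rw [← gauss, key]
      have hpt : ∀ s ∈ Ioi (0:ℝ), |α + β / s ^ 2| • Real.exp (-(f s) ^ 2)
          = α * e s + β / s ^ 2 * e s := by
        intro s hs
        rw [smul_eq_mul, habs s hs, hfe]
        ring
      rw [setIntegral_congr_fun measurableSet_Ioi hpt,
        integral_add (hIe.const_mul α) hI2, integral_const_mul _ _]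
    have hsym : ∫ s in Ioi (0:ℝ), e s = α⁻¹ * ∫ s in Ioi (0:ℝ), β / s ^ 2 * e s := by
      set g : ℝ → ℝ := fun s => β / α * s⁻¹ with hg_def
      have hβα : 0 < β / α := by positivity
      have hg' : ∀ x ∈ Ioi (0:ℝ), HasDerivWithinAt g (β / α * -(x ^ 2)⁻¹) (Ioi 0) x :=
        fun x hx => ((hasDerivAt_inv (ne_of_gt hx)).const_mul (β / α)).hasDerivWithinAt
      have hginj : InjOn g (Ioi 0) := fun a _ b _ h =>
        inv_injective (mul_left_cancel₀ (ne_of_gt hβα) h)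
      have hgimg : g '' Ioi 0 = Ioi 0 := by
        ext y
        constructor
        · rintro ⟨s, hs, rfl⟩
          have hs0 : (0:ℝ) < s := hs
          have : (0:ℝ) < β / α * s⁻¹ := by positivity
          exact this
        · intro hy
          have hy0 : (0:ℝ) < y := hy
          refine ⟨β / α / y, mem_Ioi.mpr (by positivity), ?_⟩
          simp only [hg_def]
          field_simp
      have key2 : ∫ u in g '' Ioi 0, e u
          = ∫ s in Ioi (0:ℝ), |β / α * -(s ^ 2)⁻¹| • e (g s) :=
        integral_image_eq_integral_abs_deriv_smul measurableSet_Ioi hg' hginj e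
      rw [hgimg] at key2
      rw [key2, ← integral_const_mul _ _]
      apply setIntegral_congr_fun measurableSet_Ioi
      intro s hs
      have hs0 : (0:ℝ) < s := hs
      have hα0 : α ≠ 0 := hα.ne'
      have hβ0 : β ≠ 0 := hβ.ne'
      have habs2 : |β / α * -(s ^ 2)⁻¹| = α⁻¹ * (β / s ^ 2) := by
        have h1 : β / α * -(s ^ 2)⁻¹ = -(α⁻¹ * (β / s ^ 2)) := by
          field_simp
        rw [h1, abs_neg, abs_of_nonneg (by positivity)]
      have hlin : α * (β / α * s⁻¹) - β / (β / α * s⁻¹) = -(α * s - β / s) := by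
        field_simp
        ring
      have hge : e (g s) = e s := by
        simp only [he_def, hg_def]
        rw [hlin, neg_sq]
      simp only [smul_eq_mul]
      rw [habs2, hge]
      ring
    have hM : (∫ s in Ioi (0:ℝ), β / s ^ 2 * e s) = α * ∫ s in Ioi (0:ℝ), e s := by
      rw [hsym]
      field_simp
    rw [hM] at hsplit
    have hfin : Real.sqrt π = 2 * α * ∫ s in Ioi (0:ℝ), e s := by linarith
    rw [hfin]
    field_simp

open Real Set in
/-- The Andrews–Mallows scale-mixture identity: a mean-zero normal with variance τ mixed
over an Exponential(λ²/2) distribution on τ has a Laplace(λ) marginal. -/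
theorem andrews_mallows_identity (lam z : ℝ) (hlam : 0 < lam) :
    ∫ τ in Set.Ioi (0 : ℝ),
        (Real.sqrt (2 * Real.pi * τ))⁻¹ *
          Real.exp (-(z ^ 2 / (2 * τ)) - lam ^ 2 * τ / 2) * (lam ^ 2 / 2) =
      (lam / 2) * Real.exp (-(lam * |z|)) := by
  set α := lam / Real.sqrt 2 with hα_def
  set β := |z| / Real.sqrt 2 with hβ_def
  have h2 : (0:ℝ) < Real.sqrt 2 := Real.sqrt_pos.mpr (by norm_num)
  have h2sq : Real.sqrt 2 ^ 2 = 2 := Real.sq_sqrt (by norm_num)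
  have hα : 0 < α := by positivity
  have hβ : 0 ≤ β := by positivity
  set F : ℝ → ℝ := fun τ => (Real.sqrt (2 * Real.pi * τ))⁻¹ *
      Real.exp (-(z ^ 2 / (2 * τ)) - lam ^ 2 * τ / 2) * (lam ^ 2 / 2) with hF_def
  have hsq' : ∀ x ∈ Ioi (0:ℝ), HasDerivWithinAt (fun s : ℝ => s ^ 2) (2 * x) (Ioi 0) x := by
    intro x hx
    simpa using (hasDerivAt_pow 2 x).hasDerivWithinAt
  have hsqinj : InjOn (fun s : ℝ => s ^ 2) (Ioi 0) := by
    intro a ha b hb h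
    have ha0 : (0:ℝ) < a := ha
    have hb0 : (0:ℝ) < b := hb
    simp only at h
    have h' : Real.sqrt (a ^ 2) = Real.sqrt (b ^ 2) := by rw [h]
    rwa [Real.sqrt_sq ha0.le, Real.sqrt_sq hb0.le] at h'
  have hsqimg : (fun s : ℝ => s ^ 2) '' Ioi 0 = Ioi 0 := by
    ext y
    constructor
    · rintro ⟨s, hs, rfl⟩
      have hs0 : (0:ℝ) < s := hs
      exact mem_Ioi.mpr (by positivity)
    · intro hy
      have hy0 : (0:ℝ) < y := hy
      exact ⟨Real.sqrt y, mem_Ioi.mpr (Real.sqrt_pos.mpr hy0), Real.sq_sqrt hy0.le⟩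
  have key : ∫ τ in Ioi (0:ℝ), F τ = ∫ s in Ioi (0:ℝ), |2 * s| • F (s ^ 2) := by
    have h := integral_image_eq_integral_abs_deriv_smul measurableSet_Ioi hsq' hsqinj F
    rwa [hsqimg] at h
  have hα2 : α ^ 2 = lam ^ 2 / 2 := by
    rw [hα_def, div_pow, h2sq]
  have hβ2 : β ^ 2 = z ^ 2 / 2 := by
    rw [hβ_def, div_pow, h2sq, sq_abs]
  have hαβ : α * β = lam * |z| / 2 := by
    rw [hα_def, hβ_def, div_mul_div_comm]
    rw [Real.mul_self_sqrt (by norm_num : (0:ℝ) ≤ 2)]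
  have hpt : ∀ s ∈ Ioi (0:ℝ), |2 * s| • F (s ^ 2)
      = lam ^ 2 * Real.exp (-(lam * |z|)) / Real.sqrt (2 * Real.pi)
        * Real.exp (-(α * s - β / s) ^ 2) := by
    intro s hs
    have hs0 : (0:ℝ) < s := hs
    have hsqrt : Real.sqrt (2 * Real.pi * s ^ 2) = Real.sqrt (2 * Real.pi) * s := by
      rw [Real.sqrt_mul (by positivity), Real.sqrt_sq hs0.le]
    have hexpand : (α * s - β / s) ^ 2 = α ^ 2 * s ^ 2 - 2 * (α * β) + β ^ 2 / s ^ 2 := by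
      field_simp
      ring
    have hexp : -(z ^ 2 / (2 * s ^ 2)) - lam ^ 2 * s ^ 2 / 2
        = -(α * s - β / s) ^ 2 + -(lam * |z|) := by
      rw [hexpand, hα2, hβ2, hαβ]
      field_simp
      ring
    have hπ2 : (0:ℝ) < Real.sqrt (2 * Real.pi) := Real.sqrt_pos.mpr (by positivity)
    rw [smul_eq_mul, hF_def]
    simp only
    rw [hsqrt, abs_of_pos (by positivity : (0:ℝ) < 2 * s), hexp, Real.exp_add]
    field_simp
  rw [key, setIntegral_congr_fun measurableSet_Ioi hpt, integral_const_mul _ _,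
    glasser_aux α β hα hβ]
  have h2π : Real.sqrt (2 * Real.pi) = Real.sqrt 2 * Real.sqrt Real.pi :=
    Real.sqrt_mul (by norm_num) _
  have hπ : 0 < Real.sqrt Real.pi := Real.sqrt_pos.mpr pi_pos
  rw [h2π, hα_def]
  field_simp
end

section
/- Let λ > 0, let d₁,…,d_K ∈ ℝ^p, and let F₁,…,F_L be symmetric positive semidefinite real p×p matrices. For every β ∈ ℝ^p, ∫_{(0,∞)^{K+L}} exp(−(1/2) ∑_{k=1}^K (dₖᵀβ)²/τ_k − (1/2) ∑_{ℓ=1}^L (βᵀF_ℓβ)/ξ_ℓ) · ∏_{k=1}^K (2πτ_k)^{−1/2} (λ²/2) exp(−λ²τ_k/2) · ∏_{ℓ=1}^L (2πξ_ℓ)^{−1/2} (λ²/2) exp(−λ²ξ_ℓ/2) dτ₁⋯dτ_K dξ₁⋯dξ_L = (λ/2)^{K+L} · exp(−λ(∑_{k=1}^K |dₖᵀβ| + ∑_{ℓ=1}^L √(βᵀF_ℓβ))). That is, integrating the augmented joint density of Theorem 3 over the augmentation variables {τ²_k} and {ξ²_ℓ} recovers the structured sparse prior kernel on β. -/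
open MeasureTheory Matrix Real Set



lemma glasser {A B : ℝ} (hA : 0 ≤ A) (hB : 0 < B) :
    ∫ x in Ioi (0:ℝ), Real.exp (-(A / x ^ 2 + B * x ^ 2)) =
      Real.sqrt (π / B) / 2 * Real.exp (-(2 * Real.sqrt (A * B))) := by
  rcases eq_or_lt_of_le hA with hA0 | hA
  · simp only [← hA0, zero_div, zero_add, zero_mul, Real.sqrt_zero, mul_zero, neg_zero,
      Real.exp_zero, mul_one, ← neg_mul]
    exact integral_gaussian_Ioi B
  set a := Real.sqrt A with ha_def
  set b := Real.sqrt B with hb_def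
  have ha : 0 < a := Real.sqrt_pos.mpr hA
  have hb : 0 < b := Real.sqrt_pos.mpr hB
  have ha2 : a ^ 2 = A := Real.sq_sqrt hA.le
  have hb2 : b ^ 2 = B := Real.sq_sqrt hB.le
  set r := a / b with hr_def
  have hr : 0 < r := div_pos ha hb
  -- the integrand
  set G : ℝ → ℝ := fun x => Real.exp (-(A / x ^ 2 + B * x ^ 2)) with hG_def
  -- integrability of G on Ioi 0
  have hGcont : ContinuousOn G (Ioi (0:ℝ)) := by
    apply ContinuousOn.rexp
    apply ContinuousOn.neg
    apply ContinuousOn.add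
    · exact (continuousOn_const.div (continuousOn_pow 2) (fun x hx => pow_ne_zero 2 (ne_of_gt hx)))
    · exact (continuousOn_const.mul (continuousOn_pow 2))
  have hGint : IntegrableOn G (Ioi (0:ℝ)) := by
    apply Integrable.mono' ((integrable_exp_neg_mul_sq hB).integrableOn)
      (hGcont.aestronglyMeasurable measurableSet_Ioi)
    filter_upwards [ae_restrict_mem measurableSet_Ioi] with x hx
    rw [Real.norm_eq_abs, abs_of_pos (Real.exp_pos _)]
    apply Real.exp_le_exp.mpr
    have : 0 ≤ A / x ^ 2 := div_nonneg hA.le (sq_nonneg x)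
    nlinarith
  -- the inversion map ψ x = r / x
  have hψimg : (fun x : ℝ => r / x) '' Ioi 0 = Ioi 0 := by
    ext y
    constructor
    · rintro ⟨x, hx, rfl⟩
      exact div_pos hr hx
    · intro hy
      exact ⟨r / y, div_pos hr hy, by field_simp⟩
  have hψderiv : ∀ x ∈ Ioi (0:ℝ), HasDerivWithinAt (fun x : ℝ => r / x)
      (-(r / x ^ 2)) (Ioi 0) x := by
    intro x hx
    have h := ((hasDerivAt_inv (ne_of_gt hx)).const_mul r)
    have : r * -(x ^ 2)⁻¹ = -(r / x ^ 2) := by field_simp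
    simpa [div_eq_mul_inv, this] using h.hasDerivWithinAt
  have hψinj : InjOn (fun x : ℝ => r / x) (Ioi 0) := by
    intro x hx y hy hxy
    simp only at hxy
    rw [div_eq_div_iff (ne_of_gt (mem_Ioi.mp hx)) (ne_of_gt (mem_Ioi.mp hy))] at hxy
    exact (mul_left_cancel₀ (ne_of_gt hr) hxy).symm
  -- change of variables: ∫ G over Ioi 0 = ∫ (r/x²) G x
  have hKJ : (∫ x in Ioi (0:ℝ), G x) = ∫ x in Ioi (0:ℝ), (r / x ^ 2) * G x := by
    conv_lhs => rw [← hψimg]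
    rw [integral_image_eq_integral_abs_deriv_smul measurableSet_Ioi hψderiv hψinj G]
    apply setIntegral_congr_fun measurableSet_Ioi
    intro x hx
    have hx0 : (x:ℝ) ≠ 0 := ne_of_gt hx
    have hx0' : (x:ℝ) ≠ 0 := ne_of_gt (mem_Ioi.mp hx)
    have habs : |(-(r / x ^ 2))| = r / x ^ 2 := by
      rw [abs_neg, abs_of_pos (div_pos hr (pow_pos (mem_Ioi.mp hx) 2))]
    dsimp only
    rw [habs, smul_eq_mul]
    congr 1
    simp only [hG_def]
    congr 1
    have h1 : A / (r / x) ^ 2 = B * x ^ 2 := by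
      rw [← ha2, ← hb2, hr_def, div_pow, div_pow]
      field_simp
      all_goals ring
    have h2 : B * (r / x) ^ 2 = A / x ^ 2 := by
      rw [← ha2, ← hb2, hr_def, div_pow, div_pow]
      field_simp
      all_goals ring
    rw [h1, h2, add_comm]
  -- integrability of the transformed integrand
  have hKint : IntegrableOn (fun x => (r / x ^ 2) * G x) (Ioi (0:ℝ)) := by
    have := (integrableOn_image_iff_integrableOn_abs_deriv_smul measurableSet_Ioi
      hψderiv hψinj G).mp (by rw [hψimg]; exact hGint)
    apply this.congr_fun _ measurableSet_Ioi
    intro x hx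
    have hx0' : (x:ℝ) ≠ 0 := ne_of_gt (mem_Ioi.mp hx)
    have habs : |(-(r / x ^ 2))| = r / x ^ 2 := by
      rw [abs_neg, abs_of_pos (div_pos hr (pow_pos (mem_Ioi.mp hx) 2))]
    dsimp only
    rw [habs, smul_eq_mul]
    congr 1
    simp only [hG_def]
    congr 1
    have h1 : A / (r / x) ^ 2 = B * x ^ 2 := by
      rw [← ha2, ← hb2, hr_def, div_pow, div_pow]
      field_simp
      all_goals ring
    have h2 : B * (r / x) ^ 2 = A / x ^ 2 := by
      rw [← ha2, ← hb2, hr_def, div_pow, div_pow]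
      field_simp
      all_goals ring
    rw [h1, h2, add_comm]
  -- the main substitution u = b x - a / x
  set φ : ℝ → ℝ := fun x => b * x - a / x with hφ_def
  have hφderiv : ∀ x ∈ Ioi (0:ℝ), HasDerivWithinAt φ (b + a / x ^ 2) (Ioi 0) x := by
    intro x hx
    have h1 : HasDerivAt (fun x : ℝ => b * x) b x := by
      simpa using (hasDerivAt_id x).const_mul b
    have h2 : HasDerivAt (fun x : ℝ => a / x) (a * -(x ^ 2)⁻¹) x := by
      simpa [div_eq_mul_inv] using (hasDerivAt_inv (ne_of_gt hx)).const_mul a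
    have := h1.sub h2
    have heq : b - a * -(x ^ 2)⁻¹ = b + a / x ^ 2 := by
      rw [div_eq_mul_inv]; ring
    rw [heq] at this
    exact this.hasDerivWithinAt
  have hφmono : StrictMonoOn φ (Ioi (0:ℝ)) := by
    intro x hx y hy hxy
    simp only [hφ_def]
    have h1 : b * x < b * y := by exact mul_lt_mul_of_pos_left hxy hb
    have h2 : a / y < a / x := div_lt_div_of_pos_left ha (mem_Ioi.mp hx) hxy
    linarith
  have hφinj : InjOn φ (Ioi 0) := hφmono.injOn
  have hφimg : φ '' Ioi 0 = univ := by
    apply eq_univ_of_forall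
    intro u
    set s := Real.sqrt (u ^ 2 + 4 * a * b) with hs_def
    have hs2 : s ^ 2 = u ^ 2 + 4 * a * b := Real.sq_sqrt (by nlinarith)
    have hsu : |u| < s := by
      rw [← Real.sqrt_sq_eq_abs]
      apply Real.sqrt_lt_sqrt (sq_nonneg u)
      nlinarith
    have hsu' : -u < s := by
      rcases abs_lt.mp hsu with ⟨h, _⟩; linarith
    set x := (u + s) / (2 * b) with hx_def
    have hx : 0 < x := div_pos (by linarith) (by linarith)
    refine ⟨x, hx, ?_⟩
    simp only [hφ_def]
    have hxne : x ≠ 0 := ne_of_gt hx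
    have hq : b * x ^ 2 - u * x - a = 0 := by
      rw [hx_def]
      have hbne : (2 * b) ≠ 0 := by positivity
      field_simp
      nlinarith [hs2]
    field_simp
    nlinarith [hq]
  have hmain : (∫ u, Real.exp (-u ^ 2)) =
      ∫ x in Ioi (0:ℝ), (b + a / x ^ 2) * Real.exp (-(φ x) ^ 2) := by
    have hstep : (∫ u, Real.exp (-u ^ 2)) = ∫ u in φ '' Ioi 0, Real.exp (-u ^ 2) := by
      rw [hφimg, Measure.restrict_univ]
    rw [hstep, integral_image_eq_integral_abs_deriv_smul measurableSet_Ioi hφderiv hφinj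
        (fun u => Real.exp (-u ^ 2))]
    apply setIntegral_congr_fun measurableSet_Ioi
    intro x hx
    have hxpos : (0:ℝ) < x := mem_Ioi.mp hx
    dsimp only
    rw [smul_eq_mul, abs_of_pos (by positivity)]
  have hexp_eq : ∀ x ∈ Ioi (0:ℝ),
      (b + a / x ^ 2) * Real.exp (-(φ x) ^ 2) =
      Real.exp (2 * (a * b)) * (b * G x + b * ((r / x ^ 2) * G x)) := by
    intro x hx
    have hx0 : (x:ℝ) ≠ 0 := ne_of_gt hx
    have h1 : -(φ x) ^ 2 = 2 * (a * b) + -(A / x ^ 2 + B * x ^ 2) := by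
      simp only [hφ_def]
      rw [← ha2, ← hb2]
      field_simp
      ring
    rw [h1, Real.exp_add]
    simp only [hG_def]
    have hbr : b * r = a := by
      rw [hr_def]; field_simp
    linear_combination
      (-(Real.exp (2 * (a * b)) * Real.exp (-(A / x ^ 2 + B * x ^ 2)) / x ^ 2)) * hbr
  have hgauss : (∫ u, Real.exp (-u ^ 2)) = Real.sqrt π := by
    simpa using integral_gaussian 1
  -- put it together
  have hsplit : ∫ x in Ioi (0:ℝ), (b + a / x ^ 2) * Real.exp (-(φ x) ^ 2) =
      Real.exp (2 * (a * b)) * (b * (∫ x in Ioi (0:ℝ), G x)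
        + b * ∫ x in Ioi (0:ℝ), (r / x ^ 2) * G x) := by
    rw [setIntegral_congr_fun measurableSet_Ioi hexp_eq]
    rw [integral_const_mul, integral_add (hGint.const_mul b) (hKint.const_mul b),
      integral_const_mul, integral_const_mul]
  rw [hgauss] at hmain
  rw [hsplit, ← hKJ] at hmain
  have h2b : Real.sqrt π = Real.exp (2 * (a * b)) * (2 * b * ∫ x in Ioi (0:ℝ), G x) := by
    rw [hmain]; ring
  have hfinal : (∫ x in Ioi (0:ℝ), G x) =
      Real.sqrt π / (2 * b) * Real.exp (-(2 * (a * b))) := by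
    have hexpne : Real.exp (2 * (a * b)) ≠ 0 := (Real.exp_pos _).ne'
    have h2bne : (2 * b) ≠ 0 := by positivity
    field_simp [Real.exp_neg] at h2b ⊢
    have hee := Real.exp_add (2 * a * b) (-(2 * a * b))
    rw [add_neg_cancel, Real.exp_zero] at hee
    linear_combination (-(Real.exp (-(2 * a * b)))) * h2b + (2 * b * ∫ x in Ioi (0:ℝ), G x) * hee
  rw [hfinal]
  congr 1
  · rw [Real.sqrt_div pi_pos.le, ← hb_def]
    ring
  · rw [Real.sqrt_mul hA.le]

lemma one_dim {lam : ℝ} (hlam : 0 < lam) {c : ℝ} (hc : 0 ≤ c) :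
    ∫ t in Ioi (0:ℝ), Real.exp (-(1 / 2) * (c / t)) *
      ((Real.sqrt (2 * π * t))⁻¹ * (lam ^ 2 / 2) * Real.exp (-(lam ^ 2 * t / 2))) =
    lam / 2 * Real.exp (-(lam * Real.sqrt c)) := by
  set g : ℝ → ℝ := fun t => Real.exp (-(1 / 2) * (c / t)) *
      ((Real.sqrt (2 * π * t))⁻¹ * (lam ^ 2 / 2) * Real.exp (-(lam ^ 2 * t / 2))) with hg_def
  have hsq_img : (fun x : ℝ => x ^ 2) '' Ioi 0 = Ioi 0 := by
    ext y
    constructor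
    · rintro ⟨x, hx, rfl⟩
      exact pow_pos (mem_Ioi.mp hx) 2
    · intro hy
      exact ⟨Real.sqrt y, Real.sqrt_pos.mpr hy, Real.sq_sqrt (le_of_lt hy)⟩
  have hsq_deriv : ∀ x ∈ Ioi (0:ℝ), HasDerivWithinAt (fun x : ℝ => x ^ 2) (2 * x) (Ioi 0) x := by
    intro x hx
    simpa [mul_comm] using (hasDerivAt_pow 2 x).hasDerivWithinAt
  have hsq_inj : InjOn (fun x : ℝ => x ^ 2) (Ioi 0) := by
    intro x hx y hy hxy
    simp only at hxy
    nlinarith [mem_Ioi.mp hx, mem_Ioi.mp hy]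
  have key : (∫ t in Ioi (0:ℝ), g t) =
      ∫ x in Ioi (0:ℝ), (lam ^ 2 / Real.sqrt (2 * π)) *
        Real.exp (-((c / 2) / x ^ 2 + (lam ^ 2 / 2) * x ^ 2)) := by
    conv_lhs => rw [← hsq_img]
    rw [integral_image_eq_integral_abs_deriv_smul measurableSet_Ioi hsq_deriv hsq_inj g]
    apply setIntegral_congr_fun measurableSet_Ioi
    intro x hx
    have hxpos : (0:ℝ) < x := mem_Ioi.mp hx
    have hsqx : Real.sqrt (2 * π * x ^ 2) = Real.sqrt (2 * π) * x := by
      rw [Real.sqrt_mul (by positivity), Real.sqrt_sq hxpos.le]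
    dsimp only
    rw [smul_eq_mul, abs_of_pos (by positivity), hg_def]
    dsimp only
    rw [hsqx]
    have h2π : Real.sqrt (2 * π) > 0 := Real.sqrt_pos.mpr (by positivity)
    rw [show -((c / 2) / x ^ 2 + (lam ^ 2 / 2) * x ^ 2) =
        -(1 / 2) * (c / x ^ 2) + -(lam ^ 2 * x ^ 2 / 2) by ring, Real.exp_add]
    field_simp
  rw [key, integral_const_mul, glasser (by positivity) (by positivity)]
  have h1 : Real.sqrt (π / (lam ^ 2 / 2)) = Real.sqrt (2 * π) / lam := by
    rw [show π / (lam ^ 2 / 2) = (Real.sqrt (2 * π) / lam) ^ 2 by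
      rw [div_pow, Real.sq_sqrt (by positivity)]
      field_simp]
    exact Real.sqrt_sq (by positivity)
  have h2 : Real.sqrt (c / 2 * (lam ^ 2 / 2)) = Real.sqrt c * lam / 2 := by
    rw [show c / 2 * (lam ^ 2 / 2) = (Real.sqrt c * lam / 2) ^ 2 by
      rw [div_pow, mul_pow, Real.sq_sqrt hc]
      ring]
    exact Real.sqrt_sq (by positivity)
  rw [h1, h2]
  have h2π : Real.sqrt (2 * π) > 0 := Real.sqrt_pos.mpr (by positivity)
  rw [show 2 * (Real.sqrt c * lam / 2) = lam * Real.sqrt c by ring]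
  field_simp

lemma pi_Ioi_prod_integral {n : ℕ} (g : Fin n → ℝ → ℝ) :
    ∫ x in Set.univ.pi (fun _ : Fin n => Ioi (0:ℝ)), ∏ i, g i (x i) =
      ∏ i, ∫ t in Ioi (0:ℝ), g i t := by
  rw [← integral_indicator (MeasurableSet.univ_pi fun _ => measurableSet_Ioi)]
  have h : (Set.univ.pi (fun _ : Fin n => Ioi (0:ℝ))).indicator
      (fun x : Fin n → ℝ => ∏ i, g i (x i)) =
      fun x => ∏ i, (Ioi (0:ℝ)).indicator (g i) (x i) := by
    funext x
    by_cases hx : x ∈ Set.univ.pi (fun _ : Fin n => Ioi (0:ℝ))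
    · rw [Set.indicator_of_mem hx]
      exact Finset.prod_congr rfl fun i _ =>
        (Set.indicator_of_mem (hx i (Set.mem_univ i)) _).symm
    · rw [Set.indicator_of_notMem hx]
      rw [Set.mem_pi] at hx
      push_neg at hx
      obtain ⟨i, _, hi⟩ := hx
      exact (Finset.prod_eq_zero (Finset.mem_univ i)
        (Set.indicator_of_notMem hi _)).symm
  rw [h]
  refine (MeasureTheory.integral_fintype_prod_eq_prod (𝕜 := ℝ) (ι := Fin n) (μ := fun _ => volume)
    (fun i t => (Ioi (0:ℝ)).indicator (g i) t)).trans ?_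
  exact Finset.prod_congr rfl fun i _ => integral_indicator measurableSet_Ioi

/-- Integrating the augmented joint density over the augmentation variables
`{τ_k}` and `{ξ_ℓ}` recovers the structured sparse prior kernel on `β`
(up to the factor `(λ/2)^{K+L}`). -/
theorem augmented_density_marginalizes_to_structured_sparse_kernel
    (p K L : ℕ) (lam : ℝ) (hlam : 0 < lam)
    (d : Fin K → (Fin p → ℝ))
    (F : Fin L → Matrix (Fin p) (Fin p) ℝ)
    (hFsymm : ∀ ℓ, (F ℓ).IsSymm)
    (hFpsd : ∀ ℓ, (F ℓ).PosSemidef)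
    (β : Fin p → ℝ) :
    (∫ τ in Set.univ.pi (fun _ : Fin K => Set.Ioi (0 : ℝ)),
      ∫ ξ in Set.univ.pi (fun _ : Fin L => Set.Ioi (0 : ℝ)),
        Real.exp (-(1 / 2) * (∑ k, (d k ⬝ᵥ β) ^ 2 / τ k)
            - (1 / 2) * (∑ ℓ, (β ⬝ᵥ (F ℓ) *ᵥ β) / ξ ℓ)) *
          (∏ k, (Real.sqrt (2 * Real.pi * τ k))⁻¹ * (lam ^ 2 / 2) *
            Real.exp (-(lam ^ 2 * τ k / 2))) *
          (∏ ℓ, (Real.sqrt (2 * Real.pi * ξ ℓ))⁻¹ * (lam ^ 2 / 2) *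
            Real.exp (-(lam ^ 2 * ξ ℓ / 2)))) =
      (lam / 2) ^ (K + L) *
        Real.exp (-(lam * ((∑ k, |d k ⬝ᵥ β|) +
          ∑ ℓ, Real.sqrt (β ⬝ᵥ (F ℓ) *ᵥ β)))) := by
  set f : Fin K → ℝ → ℝ := fun k t => Real.exp (-(1 / 2) * ((d k ⬝ᵥ β) ^ 2 / t)) *
      ((Real.sqrt (2 * π * t))⁻¹ * (lam ^ 2 / 2) * Real.exp (-(lam ^ 2 * t / 2))) with hf_def
  set g : Fin L → ℝ → ℝ := fun ℓ t => Real.exp (-(1 / 2) * ((β ⬝ᵥ (F ℓ) *ᵥ β) / t)) *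
      ((Real.sqrt (2 * π * t))⁻¹ * (lam ^ 2 / 2) * Real.exp (-(lam ^ 2 * t / 2))) with hg_def
  have hpt : ∀ (τ : Fin K → ℝ) (ξ : Fin L → ℝ),
      Real.exp (-(1 / 2) * (∑ k, (d k ⬝ᵥ β) ^ 2 / τ k)
            - (1 / 2) * (∑ ℓ, (β ⬝ᵥ (F ℓ) *ᵥ β) / ξ ℓ)) *
          (∏ k, (Real.sqrt (2 * Real.pi * τ k))⁻¹ * (lam ^ 2 / 2) *
            Real.exp (-(lam ^ 2 * τ k / 2))) *
          (∏ ℓ, (Real.sqrt (2 * Real.pi * ξ ℓ))⁻¹ * (lam ^ 2 / 2) *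
            Real.exp (-(lam ^ 2 * ξ ℓ / 2))) =
      (∏ k, f k (τ k)) * ∏ ℓ, g ℓ (ξ ℓ) := by
    intro τ ξ
    have hexp : -(1 / 2) * (∑ k, (d k ⬝ᵥ β) ^ 2 / τ k)
          - (1 / 2) * (∑ ℓ, (β ⬝ᵥ (F ℓ) *ᵥ β) / ξ ℓ)
        = (∑ k, -(1 / 2) * ((d k ⬝ᵥ β) ^ 2 / τ k))
          + ∑ ℓ, -(1 / 2) * ((β ⬝ᵥ (F ℓ) *ᵥ β) / ξ ℓ) := by
      rw [sub_eq_add_neg, Finset.mul_sum, Finset.mul_sum, ← Finset.sum_neg_distrib]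
      congr 1
      exact Finset.sum_congr rfl fun ℓ _ => by ring
    have hsplitf : (∏ k, f k (τ k)) =
        (∏ k, Real.exp (-(1 / 2) * ((d k ⬝ᵥ β) ^ 2 / τ k))) *
          ∏ k, (Real.sqrt (2 * π * τ k))⁻¹ * (lam ^ 2 / 2) *
            Real.exp (-(lam ^ 2 * τ k / 2)) := by
      rw [← Finset.prod_mul_distrib]
    have hsplitg : (∏ ℓ, g ℓ (ξ ℓ)) =
        (∏ ℓ, Real.exp (-(1 / 2) * ((β ⬝ᵥ (F ℓ) *ᵥ β) / ξ ℓ))) *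
          ∏ ℓ, (Real.sqrt (2 * π * ξ ℓ))⁻¹ * (lam ^ 2 / 2) *
            Real.exp (-(lam ^ 2 * ξ ℓ / 2)) := by
      rw [← Finset.prod_mul_distrib]
    rw [hsplitf, hsplitg, hexp, Real.exp_add, Real.exp_sum, Real.exp_sum]
    ring
  simp_rw [hpt]
  have hinner : ∀ τ : Fin K → ℝ,
      (∫ ξ in Set.univ.pi (fun _ : Fin L => Ioi (0:ℝ)),
        (∏ k, f k (τ k)) * ∏ ℓ, g ℓ (ξ ℓ)) =
      (∏ k, f k (τ k)) * ∏ ℓ, ∫ t in Ioi (0:ℝ), g ℓ t := by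
    intro τ
    rw [integral_const_mul, pi_Ioi_prod_integral]
  simp_rw [hinner]
  rw [integral_mul_const, pi_Ioi_prod_integral]
  have hfk : ∀ k, (∫ t in Ioi (0:ℝ), f k t) = lam / 2 * Real.exp (-(lam * |d k ⬝ᵥ β|)) := by
    intro k
    rw [hf_def]
    simp only
    rw [one_dim hlam (sq_nonneg (d k ⬝ᵥ β)), Real.sqrt_sq_eq_abs]
  have hgl : ∀ ℓ, (∫ t in Ioi (0:ℝ), g ℓ t) =
      lam / 2 * Real.exp (-(lam * Real.sqrt (β ⬝ᵥ (F ℓ) *ᵥ β))) := by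
    intro ℓ
    have hq : 0 ≤ β ⬝ᵥ (F ℓ) *ᵥ β := by
      have := (hFpsd ℓ).dotProduct_mulVec_nonneg β
      simpa using this
    rw [hg_def]
    simp only
    rw [one_dim hlam hq]
  simp_rw [hfk, hgl]
  rw [Finset.prod_mul_distrib, Finset.prod_mul_distrib, Finset.prod_const, Finset.prod_const,
    ← Real.exp_sum, ← Real.exp_sum]
  simp only [Finset.card_univ, Fintype.card_fin]
  have hs1 : (∑ k, -(lam * |d k ⬝ᵥ β|)) = -(lam * ∑ k, |d k ⬝ᵥ β|) := by
    rw [Finset.mul_sum, ← Finset.sum_neg_distrib]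
  have hs2 : (∑ ℓ, -(lam * Real.sqrt (β ⬝ᵥ (F ℓ) *ᵥ β)))
      = -(lam * ∑ ℓ, Real.sqrt (β ⬝ᵥ (F ℓ) *ᵥ β)) := by
    rw [Finset.mul_sum, ← Finset.sum_neg_distrib]
  rw [hs1, hs2, pow_add, mul_add, neg_add, Real.exp_add]
  ring
end
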